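/- Let G be a finite connected multigraph with sink s, and let R_G be the set of recurrent sandpile configurations, i.e., configurations η for which there exists ζ : V → ℕ with η = (η_max + ζ)°, where η_max(v) = deg(v) − 1. Then the operation η ⊕ ζ = (η + ζ)° makes R_G into a commutative monoid, and in fact an abelian group. -/

import Mathlib

open Finset

variable {V : Type}

/-- Toppling the vertex `v`: it loses `deg v` chips and each neighbour `u`
gains `a u v` chips (one per connecting edge). The sink is `none : Option V`. -/
def topple (a : Option V → Option V → ℕ) (deg : Option V → ℕ)
    [DecidableEq V] (η : V → ℤ) (v : V) : V → ℤ :=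
  fun u => η u - (if u = v then (deg (some v) : ℤ) else 0) + (a (some u) (some v) : ℤ)

/-- Applying a sequence of topplings. -/
def toppleSeq (a : Option V → Option V → ℕ) (deg : Option V → ℕ)
    [DecidableEq V] (η : V → ℤ) (l : List V) : V → ℤ :=
  l.foldl (topple a deg) η

/-- A sequence of topplings is legal if each toppled vertex is unstable at the
moment it is toppled. -/
def LegalSeq (a : Option V → Option V → ℕ) (deg : Option V → ℕ)
    [DecidableEq V] : (V → ℤ) → List V → Prop
  | _, [] => True
  | η, v :: l => (deg (some v) : ℤ) ≤ η v ∧ LegalSeq a deg (topple a deg η v) l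

/-- A configuration is stable if every non-sink vertex has fewer chips than
its degree. -/
def StableConfig (deg : Option V → ℕ) (η : V → ℤ) : Prop :=
  ∀ v : V, η v < (deg (some v) : ℤ)

/-- A sandpile has a nonnegative number of chips on every vertex. -/
def IsSandpile (η : V → ℤ) : Prop := ∀ v : V, 0 ≤ η v

section Aux
variable [DecidableEq V] (a : Option V → Option V → ℕ) (deg : Option V → ℕ)

lemma SP.topple_comm (η : V → ℤ) (u w : V) :
    topple a deg (topple a deg η u) w = topple a deg (topple a deg η w) u := by
  funext x; simp only [topple]; ring

lemma SP.toppleSeq_nil (η : V → ℤ) : toppleSeq a deg η [] = η := rfl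

lemma SP.toppleSeq_cons (η : V → ℤ) (v : V) (l : List V) :
    toppleSeq a deg η (v :: l) = toppleSeq a deg (topple a deg η v) l := rfl

lemma SP.toppleSeq_topple (η : V → ℤ) (v : V) (l : List V) :
    toppleSeq a deg (topple a deg η v) l = topple a deg (toppleSeq a deg η l) v := by
  induction l generalizing η with
  | nil => rfl
  | cons x t ih =>
      rw [SP.toppleSeq_cons, SP.toppleSeq_cons, SP.topple_comm, ih]

lemma SP.toppleSeq_append (η : V → ℤ) (l1 l2 : List V) :
    toppleSeq a deg η (l1 ++ l2) = toppleSeq a deg (toppleSeq a deg η l1) l2 := by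
  simp [toppleSeq, List.foldl_append]

lemma SP.toppleSeq_extract (η : V → ℤ) (v : V) (p q : List V) :
    toppleSeq a deg η (p ++ v :: q) = toppleSeq a deg (topple a deg η v) (p ++ q) := by
  rw [SP.toppleSeq_append, SP.toppleSeq_cons, ← SP.toppleSeq_topple, ← SP.toppleSeq_append]

lemma SP.topple_add (η ζ : V → ℤ) (v : V) :
    topple a deg (η + ζ) v = topple a deg η v + ζ := by
  funext x; simp only [topple, Pi.add_apply]; ring

lemma SP.toppleSeq_add (η ζ : V → ℤ) (l : List V) :
    toppleSeq a deg (η + ζ) l = toppleSeq a deg η l + ζ := by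
  induction l generalizing η with
  | nil => rfl
  | cons x t ih => rw [SP.toppleSeq_cons, SP.topple_add, ih, SP.toppleSeq_cons]

lemma SP.topple_mono {η η' : V → ℤ} (h : ∀ x, η x ≤ η' x) (v x : V) :
    topple a deg η v x ≤ topple a deg η' v x := by
  simp only [topple]
  exact add_le_add_left (sub_le_sub_right (h x) _) _

lemma SP.topple_le {v x : V} (η : V → ℤ) (hx : x ≠ v) : η x ≤ topple a deg η v x := by
  simp only [topple, if_neg hx]
  have : (0:ℤ) ≤ (a (some x) (some v) : ℤ) := Int.natCast_nonneg _
  linarith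

lemma SP.legal_mono : ∀ (l : List V) {η η' : V → ℤ}, (∀ x, η x ≤ η' x) →
    LegalSeq a deg η l → LegalSeq a deg η' l
  | [], _, _, _, _ => trivial
  | v :: t, η, η', h, hl => by
      obtain ⟨h1, h2⟩ := hl
      exact ⟨h1.trans (h v), SP.legal_mono t (fun x => SP.topple_mono a deg h v x) h2⟩

lemma SP.coord_mono {v : V} : ∀ (l : List V) (η : V → ℤ), v ∉ l →
    η v ≤ toppleSeq a deg η l v
  | [], _, _ => le_refl _
  | u :: t, η, h => by
      rw [SP.toppleSeq_cons]
      have hvu : v ≠ u := fun e => h (e ▸ (List.mem_cons_self : u ∈ u :: t))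
      exact (SP.topple_le a deg η hvu).trans
        (SP.coord_mono t _ (fun hv => h (List.mem_cons_of_mem _ hv)))

lemma SP.mem_of_unstable (l : List V) (η : V → ℤ) (hl : LegalSeq a deg η l)
    (hs : StableConfig deg (toppleSeq a deg η l)) (v : V)
    (hv : (deg (some v) : ℤ) ≤ η v) : v ∈ l := by
  by_contra h
  exact absurd (hs v) (not_lt.2 (hv.trans (SP.coord_mono a deg l η h)))

lemma SP.mem_split {v : V} : ∀ {l : List V}, v ∈ l → ∃ p q, l = p ++ v :: q ∧ v ∉ p
  | u :: t, h => by
      by_cases hu : u = v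
      · exact ⟨[], t, by rw [hu]; rfl, (List.not_mem_nil : v ∉ [])⟩
      · have hvt : v ∈ t := by
          rcases List.mem_cons.1 h with h' | h'
          · exact absurd h'.symm hu
          · exact h'
        obtain ⟨p, q, hpq, hvp⟩ := SP.mem_split hvt
        refine ⟨u :: p, q, by rw [hpq]; rfl, ?_⟩
        intro hc
        rcases List.mem_cons.1 hc with h' | h'
        · exact hu h'.symm
        · exact hvp h'

lemma SP.legal_extract : ∀ (p : List V) {η : V → ℤ} {v : V} {q : List V}, v ∉ p →
    (deg (some v) : ℤ) ≤ η v → LegalSeq a deg η (p ++ v :: q) →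
    LegalSeq a deg (topple a deg η v) (p ++ q)
  | [], η, v, q, _, hv, hl => hl.2
  | u :: p, η, v, q, hvp, hv, hl => by
      obtain ⟨h1, h2⟩ := hl
      have hvu : v ≠ u := fun e => hvp (e ▸ (List.mem_cons_self : u ∈ u :: p))
      have hvp' : v ∉ p := fun h => hvp (List.mem_cons_of_mem _ h)
      refine ⟨h1.trans (SP.topple_le a deg η (Ne.symm hvu)), ?_⟩
      rw [SP.topple_comm]
      exact SP.legal_extract p hvp' (hv.trans (SP.topple_le a deg η hvu)) h2

lemma SP.stab_unique : ∀ (l1 : List V) (η : V → ℤ) (l2 : List V),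
    LegalSeq a deg η l1 → StableConfig deg (toppleSeq a deg η l1) →
    LegalSeq a deg η l2 → StableConfig deg (toppleSeq a deg η l2) →
    toppleSeq a deg η l1 = toppleSeq a deg η l2
  | [], η, [], _, _, _, _ => rfl
  | [], η, v :: t, _, hs1, hl2, _ => absurd (hs1 v) (not_lt.2 hl2.1)
  | v :: t, η, l2, hl1, hs1, hl2, hs2 => by
      obtain ⟨h1, h2⟩ := hl1
      have hv : v ∈ l2 := SP.mem_of_unstable a deg l2 η hl2 hs2 v h1
      obtain ⟨p, q, rfl, hvp⟩ := SP.mem_split hv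
      rw [SP.toppleSeq_cons] at hs1 ⊢
      rw [SP.toppleSeq_extract] at hs2 ⊢
      exact SP.stab_unique t _ (p ++ q) h2 hs1
        (SP.legal_extract a deg p hvp h1 hl2) hs2

lemma SP.topple_sandpile {η : V → ℤ} {v : V} (hv : (deg (some v) : ℤ) ≤ η v)
    (h : IsSandpile η) : IsSandpile (topple a deg η v) := by
  intro x
  simp only [topple]
  have := h x
  have ha : (0:ℤ) ≤ (a (some x) (some v) : ℤ) := Int.natCast_nonneg _
  by_cases hx : x = v
  · subst hx; rw [if_pos rfl]; linarith
  · rw [if_neg hx]; linarith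

lemma SP.toppleSeq_sandpile : ∀ (l : List V) (η : V → ℤ), LegalSeq a deg η l →
    IsSandpile η → IsSandpile (toppleSeq a deg η l)
  | [], _, _, h => h
  | v :: t, η, hl, h =>
      SP.toppleSeq_sandpile t _ hl.2 (SP.topple_sandpile a deg hl.1 h)

lemma SP.legal_append : ∀ (l1 : List V) {η : V → ℤ} {l2 : List V},
    LegalSeq a deg η l1 → LegalSeq a deg (toppleSeq a deg η l1) l2 →
    LegalSeq a deg η (l1 ++ l2)
  | [], _, _, _, h => h
  | v :: t, η, l2, h1, h2 => ⟨h1.1, SP.legal_append t h1.2 h2⟩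

end Aux

section Stab
variable [DecidableEq V] (a : Option V → Option V → ℕ) (deg : Option V → ℕ)
  (stab : (V → ℤ) → V → ℤ)
  (hstab : ∀ η : V → ℤ, IsSandpile η →
    ∃ l : List V, LegalSeq a deg η l ∧ stab η = toppleSeq a deg η l ∧
      StableConfig deg (stab η))

include hstab

lemma SP.stab_eq {η : V → ℤ} (hη : IsSandpile η) {l : List V}
    (hl : LegalSeq a deg η l) (hs : StableConfig deg (toppleSeq a deg η l)) :
    stab η = toppleSeq a deg η l := by
  obtain ⟨l0, hl0, he, hs0⟩ := hstab η hη
  rw [he] at hs0 ⊢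
  exact SP.stab_unique a deg l0 η l hl0 hs0 hl hs

lemma SP.stab_stable {η : V → ℤ} (hη : IsSandpile η) : StableConfig deg (stab η) :=
  (hstab η hη).choose_spec.2.2

lemma SP.stab_sandpile {η : V → ℤ} (hη : IsSandpile η) : IsSandpile (stab η) := by
  obtain ⟨l, hl, he, _⟩ := hstab η hη
  rw [he]
  exact SP.toppleSeq_sandpile a deg l η hl hη

lemma SP.stab_of_stable {η : V → ℤ} (hη : IsSandpile η) (hs : StableConfig deg η) :
    stab η = η :=
  SP.stab_eq a deg stab hstab hη (l := []) trivial hs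

lemma SP.stab_add {x y : V → ℤ} (hx : IsSandpile x) (hy : IsSandpile y) :
    stab (x + y) = stab (stab x + y) := by
  obtain ⟨l, hl, he, hs⟩ := hstab x hx
  have hxy : IsSandpile (x + y) := fun v => add_nonneg (hx v) (hy v)
  have hsxy : IsSandpile (stab x + y) := fun v =>
    add_nonneg (SP.stab_sandpile a deg stab hstab hx v) (hy v)
  obtain ⟨l', hl', he', hs'⟩ := hstab (stab x + y) hsxy
  have hseq : toppleSeq a deg (x + y) l = stab x + y := by
    rw [SP.toppleSeq_add, ← he]
  have hlegal : LegalSeq a deg (x + y) l :=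
    SP.legal_mono a deg l (fun v => le_add_of_nonneg_right (hy v)) hl
  have happ : LegalSeq a deg (x + y) (l ++ l') := by
    apply SP.legal_append a deg l hlegal
    rw [hseq]; exact hl'
  have hres : toppleSeq a deg (x + y) (l ++ l') = stab (stab x + y) := by
    rw [SP.toppleSeq_append, hseq, ← he']
  have h := SP.stab_eq a deg stab hstab hxy happ (by rw [hres]; exact hs')
  rw [h, hres]

end Stab

def SPpow (stab : (V → ℤ) → V → ℤ) (ηmax : V → ℤ) : ℕ → (V → ℤ)
  | 0 => ηmax
  | n + 1 => stab (SPpow stab ηmax n + ηmax)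

lemma SPpow_zero (stab : (V → ℤ) → V → ℤ) (ηmax : V → ℤ) :
    SPpow stab ηmax 0 = ηmax := rfl

lemma SPpow_succ (stab : (V → ℤ) → V → ℤ) (ηmax : V → ℤ) (n : ℕ) :
    SPpow stab ηmax (n + 1) = stab (SPpow stab ηmax n + ηmax) := rfl

/-- `stmt_14`: the set of recurrent configurations with the operation
`η ⊕ ζ = (η + ζ)°` is a commutative monoid, in fact an abelian group.
Here `stab` is the stabilization map `η ↦ η°` (well defined by the abelian
property), hypothesized through its defining property. -/
theorem stmt_14 (V : Type) [Fintype V] [DecidableEq V]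
    (a : Option V → Option V → ℕ)
    (hsymm : ∀ p q, a p q = a q p) (hloop : ∀ p, a p p = 0)
    (hconn : ∀ p q : Option V, Relation.ReflTransGen (fun p q => 0 < a p q) p q)
    (deg : Option V → ℕ) (hdeg : ∀ p, deg p = ∑ q : Option V, a p q)
    (stab : (V → ℤ) → V → ℤ)
    (hstab : ∀ η : V → ℤ, IsSandpile η →
      ∃ l : List V, LegalSeq a deg η l ∧ stab η = toppleSeq a deg η l ∧
        StableConfig deg (stab η))
    -- the maximal stable configuration `η_max v = deg v - 1`:
    (ηmax : V → ℤ) (hηmax : ∀ v, ηmax v = (deg (some v) : ℤ) - 1)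
    -- the set of recurrent configurations:
    (R : Set (V → ℤ))
    (hR : R = {η | IsSandpile η ∧
      ∃ ζ : V → ℤ, IsSandpile ζ ∧ η = stab (ηmax + ζ)}) :
    -- closure of `⊕`:
    (∀ η ∈ R, ∀ ζ ∈ R, stab (η + ζ) ∈ R) ∧
    -- associativity:
    (∀ η ∈ R, ∀ ζ ∈ R, ∀ ξ ∈ R,
      stab (stab (η + ζ) + ξ) = stab (η + stab (ζ + ξ))) ∧
    -- commutativity:
    (∀ η ∈ R, ∀ ζ ∈ R, stab (η + ζ) = stab (ζ + η)) ∧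
    -- identity element and inverses:
    (∃ ε ∈ R, (∀ η ∈ R, stab (η + ε) = η) ∧
      ∀ η ∈ R, ∃ ζ ∈ R, stab (η + ζ) = ε) := by
  -- every vertex has positive degree, by connectivity to the sink
  have hdegpos : ∀ v : V, 1 ≤ (deg (some v) : ℤ) := by
    intro v
    rcases (hconn (some v) none).cases_head with h | ⟨q, hq, _⟩
    · simp at h
    · have h1 : a (some v) q ≤ deg (some v) := by
        rw [hdeg]
        exact Finset.single_le_sum (fun i _ => Nat.zero_le _) (Finset.mem_univ q)
      have h2 : 1 ≤ deg (some v) := le_trans hq h1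
      exact_mod_cast h2
  have hmax_sp : IsSandpile ηmax := fun v => by rw [hηmax]; linarith [hdegpos v]
  have hmax_st : StableConfig deg ηmax := fun v => by rw [hηmax]; linarith [hdegpos v]
  have SAdd : ∀ {x y : V → ℤ}, IsSandpile x → IsSandpile y → IsSandpile (x + y) :=
    fun hx hy v => add_nonneg (hx v) (hy v)
  have stab_addl : ∀ (x y : V → ℤ), IsSandpile x → IsSandpile y →
      stab (stab x + y) = stab (x + y) :=
    fun x y hx hy => (SP.stab_add a deg stab hstab hx hy).symm
  have stab_sp : ∀ {x : V → ℤ}, IsSandpile x → IsSandpile (stab x) :=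
    fun hx => SP.stab_sandpile a deg stab hstab hx
  have stab_addr : ∀ (x y : V → ℤ), IsSandpile x → IsSandpile y →
      stab (x + stab y) = stab (x + y) := by
    intro x y hx hy
    rw [add_comm x (stab y), stab_addl y x hy hx, add_comm y x]
  -- basic facts about R
  have hRsp : ∀ η ∈ R, IsSandpile η := by
    intro η hη; rw [hR] at hη; exact hη.1
  have hRst : ∀ η ∈ R, StableConfig deg η := by
    intro η hη
    rw [hR] at hη
    obtain ⟨h1, ζ, hζ, rfl⟩ := hη
    exact SP.stab_stable a deg stab hstab (SAdd hmax_sp hζ)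
  -- R is an ideal: adding any sandpile and stabilizing stays in R
  have ideal : ∀ η ∈ R, ∀ β : V → ℤ, IsSandpile β → stab (η + β) ∈ R := by
    intro η hη β hβ
    rw [hR] at hη ⊢
    obtain ⟨h1, ζ, hζ, rfl⟩ := hη
    refine ⟨stab_sp (SAdd (stab_sp (SAdd hmax_sp hζ)) hβ), ζ + β, SAdd hζ hβ, ?_⟩
    rw [stab_addl (ηmax + ζ) β (SAdd hmax_sp hζ) hβ, add_assoc]
  -- transitivity: any recurrent config can be reached from any other
  have htrans : ∀ η ∈ R, ∀ ζ ∈ R, ∃ β : V → ℤ, IsSandpile β ∧ stab (η + β) = ζ := by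
    intro η hη ζ hζ
    rw [hR] at hζ
    obtain ⟨h1, α, hα, hζe⟩ := hζ
    refine ⟨(ηmax - η) + α, ?_, ?_⟩
    · intro v
      have h2 := hRst η hη v
      have h3 := hα v
      have h4 := hηmax v
      simp only [Pi.add_apply, Pi.sub_apply]
      omega
    · have he : η + ((ηmax - η) + α) = ηmax + α := by abel
      rw [he, ← hζe]
  -- ηmax is recurrent
  have hmaxR : ηmax ∈ R := by
    rw [hR]
    refine ⟨hmax_sp, 0, fun v => le_refl 0, ?_⟩
    rw [add_zero, SP.stab_of_stable a deg stab hstab hmax_sp hmax_st]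
  -- powers of ηmax
  have powR : ∀ n, SPpow stab ηmax n ∈ R := by
    intro n
    induction n with
    | zero => exact hmaxR
    | succ n ih => exact ideal _ ih ηmax hmax_sp
  have powadd : ∀ m n, SPpow stab ηmax (m + n + 1) =
      stab (SPpow stab ηmax m + SPpow stab ηmax n) := by
    intro m n
    induction n with
    | zero => rw [SPpow_zero]; rfl
    | succ n ih =>
        have e1 : m + (n + 1) + 1 = (m + n + 1) + 1 := by omega
        rw [e1, SPpow_succ, ih,
          stab_addl _ _ (SAdd (hRsp _ (powR m)) (hRsp _ (powR n))) hmax_sp,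
          add_assoc, ← stab_addr _ _ (hRsp _ (powR m)) (SAdd (hRsp _ (powR n)) hmax_sp),
          ← SPpow_succ stab ηmax n]
  -- pigeonhole: two equal powers
  have hpig : ∃ i j : ℕ, i ≠ j ∧ SPpow stab ηmax i = SPpow stab ηmax j := by
    have hbound : ∀ n v, 0 ≤ SPpow stab ηmax n v ∧
        SPpow stab ηmax n v < (deg (some v) : ℤ) :=
      fun n v => ⟨hRsp _ (powR n) v, hRst _ (powR n) v⟩
    have hg : ∀ n v, (SPpow stab ηmax n v).toNat < deg (some v) := by
      intro n v
      have := hbound n v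
      omega
    obtain ⟨i, j, hij, hgij⟩ := Finite.exists_ne_map_eq_of_infinite
      (fun (n : ℕ) => (fun v => (⟨(SPpow stab ηmax n v).toNat, hg n v⟩ :
        Fin (deg (some v)))))
    refine ⟨i, j, hij, ?_⟩
    funext v
    have h2 : (SPpow stab ηmax i v).toNat = (SPpow stab ηmax j v).toNat :=
      congrArg Fin.val (congrFun hgij v)
    have hbi := hbound i v
    have hbj := hbound j v
    omega
  -- extract an idempotent
  obtain ⟨i, j, hij, hpow⟩ := hpig
  wlog hlt : i < j generalizing i j
  · exact this j i (Ne.symm hij) hpow.symm (by omega)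
  have powshift : ∀ k, SPpow stab ηmax (i + k) = SPpow stab ηmax (j + k) := by
    intro k
    induction k with
    | zero => simpa using hpow
    | succ k ih =>
        have e1 : i + (k + 1) = (i + k) + 1 := by omega
        have e2 : j + (k + 1) = (j + k) + 1 := by omega
        rw [e1, e2, SPpow_succ, SPpow_succ, ih]
  set d := j - i with hd
  have hd1 : 1 ≤ d := by omega
  have hB : ∀ t n, i ≤ n → SPpow stab ηmax n = SPpow stab ηmax (n + t * d) := by
    intro t
    induction t with
    | zero => intro n _; simp
    | succ t ih =>
        intro n hn
        have h1 := ih n hn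
        have h2 : SPpow stab ηmax (n + t * d) = SPpow stab ηmax (n + t * d + d) := by
          have h3 := powshift (n + t * d - i)
          have e1 : i + (n + t * d - i) = n + t * d := by omega
          have e2 : j + (n + t * d - i) = n + t * d + d := by omega
          rw [e1, e2] at h3
          exact h3
        have e3 : n + t * d + d = n + (t + 1) * d := by ring
        rw [h1, h2, e3]
  set m := (i + 1) * d - 1 with hm
  have hmi : i ≤ m := by
    have : i + 1 ≤ (i + 1) * d := Nat.le_mul_of_pos_right _ (by omega)
    omega
  have hm1 : m + 1 = (i + 1) * d := by
    have : i + 1 ≤ (i + 1) * d := Nat.le_mul_of_pos_right _ (by omega)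
    omega
  set ε := SPpow stab ηmax m with hε
  have hεR : ε ∈ R := powR m
  have hεsp : IsSandpile ε := hRsp _ hεR
  have hidem : stab (ε + ε) = ε := by
    have h0 : stab (ε + ε) = SPpow stab ηmax (m + m + 1) := (powadd m m).symm
    have h1 : SPpow stab ηmax m = SPpow stab ηmax (m + (i + 1) * d) := hB (i + 1) m hmi
    have e : m + m + 1 = m + (i + 1) * d := by omega
    rw [h0, e, ← h1]
  refine ⟨fun η hη ζ hζ => ideal η hη ζ (hRsp ζ hζ), ?_, ?_, ?_⟩
  · -- associativity
    intro η hη ζ hζ ξ hξ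
    rw [stab_addl _ _ (SAdd (hRsp η hη) (hRsp ζ hζ)) (hRsp ξ hξ),
      stab_addr _ _ (hRsp η hη) (SAdd (hRsp ζ hζ) (hRsp ξ hξ)), add_assoc]
  · -- commutativity
    intro η _ ζ _
    rw [add_comm]
  · -- identity and inverses
    refine ⟨ε, hεR, ?_, ?_⟩
    · intro η hη
      obtain ⟨β, hβ, hβe⟩ := htrans ε hεR η hη
      rw [← hβe, stab_addl (ε + β) ε (SAdd hεsp hβ) hεsp]
      have he : (ε + β) + ε = (ε + ε) + β := by abel
      rw [he, ← stab_addl (ε + ε) β (SAdd hεsp hεsp) hβ, hidem]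
    · intro η hη
      obtain ⟨β, hβ, hβe⟩ := htrans η hη ε hεR
      refine ⟨stab (ε + β), ideal ε hεR β hβ, ?_⟩
      rw [stab_addr η (ε + β) (hRsp η hη) (SAdd hεsp hβ)]
      have he : η + (ε + β) = (η + β) + ε := by abel
      rw [he, ← stab_addl (η + β) ε (SAdd (hRsp η hη) hβ) hεsp, hβe, hidem]
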